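/- Let φ : T → T be Lipschitz and let A = { v ∈ T : φ is not constant on S_v }, where S_v is the sector consisting of v and all its descendants. If either A is finite, or A is infinite and |φ(v)| → ∞ as |v| → ∞ with v ranging over A, then C_φ maps Lip_0(T) into itself. -/

import Mathlib

/-- An infinite, locally finite rooted tree in which every vertex other than
the root has degree greater than 1, together with the parent map. -/
structure LipTree (V : Type*) where
  root : V
  G : SimpleGraph V
  isTree : G.IsTree
  locFin : ∀ v : V, (G.neighborSet v).Finite
  infinite : Infinite V
  deg_gt : ∀ v : V, v ≠ root → 1 < (G.neighborSet v).ncard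
  par : V → V
  par_root : par root = root
  adj_par : ∀ v : V, v ≠ root → G.Adj v (par v)
  dist_par : ∀ v : V, v ≠ root → G.dist (par v) root + 1 = G.dist v root

namespace LipTree

variable {V : Type*}

/-- `|v|`, the distance from `v` to the root. -/
noncomputable def depth (T : LipTree V) (v : V) : ℕ := T.G.dist v T.root

/-- membership in the Lipschitz space `Lip(T)`. -/
def MemLip (T : LipTree V) (f : V → ℂ) : Prop :=
  ∃ C : ℝ, ∀ v : V, v ≠ T.root → ‖f v - f (T.par v)‖ ≤ C

/-- membership in the little Lipschitz space `Lip₀(T)`. -/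
def MemLip0 (T : LipTree V) (f : V → ℂ) : Prop :=
  T.MemLip f ∧ ∀ ε : ℝ, 0 < ε → ∃ N : ℕ, ∀ v : V, v ≠ T.root → N ≤ T.depth v →
    ‖f v - f (T.par v)‖ < ε

/-- the norm `‖f‖_Lip = max {|f(root)|, sup_{v ≠ root} |f(v) - f(v⁻)|}`. -/
noncomputable def normLip (T : LipTree V) (f : V → ℂ) : ℝ :=
  max (‖f T.root‖)
    (sSup {r : ℝ | ∃ v : V, v ≠ T.root ∧ r = ‖f v - f (T.par v)‖})

/-- `φ` is a Lipschitz self-map of the tree. -/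
noncomputable def LipschitzSelfMap (T : LipTree V) (φ : V → V) : Prop :=
  ∃ C : ℕ, ∀ v : V, v ≠ T.root → T.G.dist (φ v) (φ (T.par v)) ≤ C

/-- the Lipschitz number `λ_φ`. -/
noncomputable def lipNum (T : LipTree V) (φ : V → V) : ℝ :=
  sSup {r : ℝ | ∃ v : V, v ≠ T.root ∧ r = (T.G.dist (φ v) (φ (T.par v)) : ℝ)}

/-- the composition operator `C_φ` maps `Lip₀` into itself and is bounded there. -/
def BoundedOnLip0 (T : LipTree V) (φ : V → V) : Prop :=
  (∀ f : V → ℂ, T.MemLip0 f → T.MemLip0 (f ∘ φ)) ∧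
  ∃ C : ℝ, ∀ f : V → ℂ, T.MemLip0 f → T.normLip (f ∘ φ) ≤ C * T.normLip f

/-- `u` belongs to the sector `S_v` determined by `v`. -/
def InSector (T : LipTree V) (v u : V) : Prop := ∃ k : ℕ, T.par^[k] u = v

end LipTree


namespace LipTree

variable {V : Type*} (T : LipTree V)

lemma conn : T.G.Connected := T.isTree.isConnected

lemma depth_root : T.depth T.root = 0 := SimpleGraph.dist_self

/-- the neighbor of `x` that is closer to the root is `par x` -/
lemma eq_par {x y : V} (hx : x ≠ T.root) (hadj : T.G.Adj x y)
    (hd : T.G.dist y T.root + 1 = T.G.dist x T.root) : y = T.par x := by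
  classical
  have conn := T.conn
  have key : ∀ z : V, T.G.Adj x z → T.G.dist z T.root + 1 = T.G.dist x T.root →
      ∃ p : T.G.Walk x T.root, p.IsPath ∧ p.getVert 1 = z := by
    intro z hz hdz
    obtain ⟨q, hq, hql⟩ := conn.exists_path_of_dist z T.root
    have hxns : x ∉ q.support := by
      intro hmem
      have h1 : T.G.dist x T.root ≤ (q.dropUntil x hmem).length :=
        SimpleGraph.dist_le _
      have h2 : (q.dropUntil x hmem).length ≤ q.length :=
        SimpleGraph.Walk.length_dropUntil_le q hmem
      omega
    exact ⟨SimpleGraph.Walk.cons hz q, hq.cons hxns,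
      (SimpleGraph.Walk.getVert_cons_succ (n := 0) q hz).trans q.getVert_zero⟩
  obtain ⟨p1, hp1, hg1⟩ := key y hadj hd
  obtain ⟨p2, hp2, hg2⟩ := key (T.par x) (T.adj_par x hx) (T.dist_par x hx)
  have := (T.isTree.existsUnique_path x T.root).unique hp1 hp2
  rw [← hg1, ← hg2, this]

/-- adjacent vertices have different depths -/
lemma adj_depth_ne {x y : V} (hadj : T.G.Adj x y) :
    T.G.dist x T.root ≠ T.G.dist y T.root := by
  classical
  have conn := T.conn
  intro he
  have hx : x ≠ T.root := by
    rintro rfl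
    have : y = T.root := by
      have := (conn.dist_eq_zero_iff (u := y) (v := T.root)).mp
        (by rw [← he]; exact SimpleGraph.dist_self)
      exact this
    exact T.G.loopless.irrefl _ (this ▸ hadj)
  obtain ⟨q, hq, hql⟩ := conn.exists_path_of_dist y T.root
  obtain ⟨px, hpx, hpxl⟩ := conn.exists_path_of_dist x T.root
  have hxns : x ∉ q.support := by
    intro hmem
    have hsplit := congrArg SimpleGraph.Walk.length (q.take_spec hmem)
    rw [SimpleGraph.Walk.length_append] at hsplit
    have h1 : T.G.dist x T.root ≤ (q.dropUntil x hmem).length :=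
      SimpleGraph.dist_le _
    have h0 : (q.takeUntil x hmem).length = 0 := by omega
    have := SimpleGraph.Walk.eq_of_length_eq_zero h0
    exact T.G.loopless.irrefl x (this ▸ hadj)
  have hcons : (SimpleGraph.Walk.cons hadj q).IsPath := hq.cons hxns
  have := (T.isTree.existsUnique_path x T.root).unique hcons hpx
  have hl := congrArg SimpleGraph.Walk.length this
  rw [SimpleGraph.Walk.length_cons] at hl
  omega

/-- every edge is a parent-child edge (with the child not the root) -/
lemma adj_par_or {x y : V} (hadj : T.G.Adj x y) :
    (x ≠ T.root ∧ y = T.par x) ∨ (y ≠ T.root ∧ x = T.par y) := by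
  have conn := T.conn
  have h1 : T.G.dist x y = 1 := SimpleGraph.dist_eq_one_iff_adj.mpr hadj
  have h1' : T.G.dist y x = 1 := SimpleGraph.dist_eq_one_iff_adj.mpr hadj.symm
  have t1 : T.G.dist x T.root ≤ T.G.dist x y + T.G.dist y T.root := conn.dist_triangle
  have t2 : T.G.dist y T.root ≤ T.G.dist y x + T.G.dist x T.root := conn.dist_triangle
  have hne := T.adj_depth_ne hadj
  rcases Nat.lt_or_ge (T.G.dist y T.root) (T.G.dist x T.root) with hlt | hge
  · left
    have hx : x ≠ T.root := by
      rintro rfl; rw [SimpleGraph.dist_self] at hlt; omega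
    exact ⟨hx, T.eq_par hx hadj (by omega)⟩
  · right
    have hlt : T.G.dist x T.root < T.G.dist y T.root := by omega
    have hy : y ≠ T.root := by
      rintro rfl; rw [SimpleGraph.dist_self] at hlt; omega
    exact ⟨hy, T.eq_par hy hadj.symm (by omega)⟩

/-- telescoping estimate along a walk -/
lemma telescope (f : V → ℂ) (N : ℕ) (δ : ℝ)
    (hf : ∀ u : V, u ≠ T.root → N ≤ T.depth u → ‖f u - f (T.par u)‖ ≤ δ)
    {a b : V} (w : T.G.Walk a b) (hs : ∀ z ∈ w.support, N ≤ T.depth z) :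
    ‖f a - f b‖ ≤ w.length * δ := by
  induction w with
  | nil => simp
  | @cons a c b hadj q ih =>
    have hsq : ∀ z ∈ q.support, N ≤ T.depth z := fun z hz =>
      hs z (by rw [SimpleGraph.Walk.support_cons]; exact List.mem_cons_of_mem _ hz)
    have edge : ‖f a - f c‖ ≤ δ := by
      rcases T.adj_par_or hadj with ⟨hne, hpar⟩ | ⟨hne, hpar⟩
      · rw [hpar]
        exact hf a hne (hs a (SimpleGraph.Walk.start_mem_support _))
      · rw [norm_sub_rev, hpar]
        exact hf c hne (hsq c q.start_mem_support)
    calc ‖f a - f b‖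
        ≤ ‖f a - f c‖ + ‖f c - f b‖ := norm_sub_le_norm_sub_add_norm_sub _ _ _
      _ ≤ δ + q.length * δ := add_le_add edge (ih hsq)
      _ = (SimpleGraph.Walk.cons hadj q).length * δ := by
          rw [SimpleGraph.Walk.length_cons]; push_cast; ring

end LipTree

/-- Let `A` be the set of vertices `v` such that `φ` is not constant on the sector `S_v`.
If `A` is finite, or `A` is infinite and `|φ(v)| → ∞` as `|v| → ∞` along `v ∈ A`, then
`C_φ` maps `Lip₀` into itself. -/
theorem comp_maps_lip0_of_sector_condition {V : Type*} (T : LipTree V) (φ : V → V)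
    (hφ : T.LipschitzSelfMap φ)
    (A : Set V)
    (hA : A = {v : V | ¬ ∀ u₁ u₂ : V, T.InSector v u₁ → T.InSector v u₂ → φ u₁ = φ u₂})
    (h : A.Finite ∨ (A.Infinite ∧
      ∀ M : ℕ, ∃ N : ℕ, ∀ v ∈ A, N ≤ T.depth v → M ≤ T.depth (φ v))) :
    ∀ f : V → ℂ, T.MemLip0 f → T.MemLip0 (f ∘ φ) := by
  classical
  intro f hf
  obtain ⟨⟨L, hL⟩, hlittle⟩ := hf
  obtain ⟨C, hC⟩ := hφ
  have conn := T.conn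
  have hconst : ∀ v : V, v ≠ T.root → T.par v ∉ A → φ v = φ (T.par v) := by
    intro v hv hpar
    rw [hA] at hpar
    simp only [Set.mem_setOf_eq, not_not] at hpar
    exact hpar v (T.par v) ⟨1, by simp⟩ ⟨0, rfl⟩
  have hL' : ∀ u : V, u ≠ T.root → 0 ≤ T.depth u →
      ‖f u - f (T.par u)‖ ≤ max L 0 :=
    fun u hu _ => le_trans (hL u hu) (le_max_left _ _)
  constructor
  · refine ⟨(C : ℝ) * max L 0, fun v hv => ?_⟩
    obtain ⟨w, hw⟩ := conn.exists_walk_length_eq_dist (φ v) (φ (T.par v))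
    have key := T.telescope f 0 (max L 0) hL' w (fun z _ => Nat.zero_le _)
    show ‖f (φ v) - f (φ (T.par v))‖ ≤ (C : ℝ) * max L 0
    calc ‖f (φ v) - f (φ (T.par v))‖ ≤ w.length * max L 0 := key
      _ ≤ (C : ℝ) * max L 0 := by
          apply mul_le_mul_of_nonneg_right _ (le_max_right L 0)
          have : w.length ≤ C := by rw [hw]; exact hC v hv
          exact_mod_cast this
  · intro ε hε
    rcases h with hfin | ⟨_, h2⟩
    · obtain ⟨D, hD⟩ : ∃ D : ℕ, ∀ a ∈ A, T.depth a ≤ D := by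
        obtain ⟨D, hD⟩ := (hfin.image T.depth).bddAbove
        exact ⟨D, fun a ha => hD (Set.mem_image_of_mem _ ha)⟩
      refine ⟨D + 2, fun v hv hdv => ?_⟩
      have hparA : T.par v ∉ A := by
        intro hm
        have h1 : T.depth (T.par v) + 1 = T.depth v := T.dist_par v hv
        have h2 := hD _ hm
        omega
      simp only [Function.comp_apply, hconst v hv hparA, sub_self, map_zero, norm_zero]
      exact hε
    · have hC1 : (0:ℝ) < (C : ℝ) + 1 := by positivity
      have hδ : 0 < ε / ((C : ℝ) + 1) := div_pos hε hC1
      obtain ⟨N₀, hN₀⟩ := hlittle _ hδ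
      obtain ⟨N₁, hN₁⟩ := h2 (N₀ + C)
      refine ⟨N₁ + 1, fun v hv hdv => ?_⟩
      by_cases hparA : T.par v ∈ A
      · have hdp : T.depth (T.par v) + 1 = T.depth v := T.dist_par v hv
        have hφp : N₀ + C ≤ T.G.dist (φ (T.par v)) T.root :=
          hN₁ _ hparA (by omega)
        obtain ⟨w, hw⟩ := conn.exists_walk_length_eq_dist (φ v) (φ (T.par v))
        have hwlen : w.length ≤ C := by rw [hw]; exact hC v hv
        have hsup : ∀ z ∈ w.support, N₀ ≤ T.depth z := by
          intro z hz
          have h1 : T.G.dist z (φ (T.par v)) ≤ w.length :=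
            le_trans (SimpleGraph.dist_le (w.dropUntil z hz))
              (SimpleGraph.Walk.length_dropUntil_le w hz)
          have h2 : T.G.dist (φ (T.par v)) T.root ≤
              T.G.dist (φ (T.par v)) z + T.G.dist z T.root := conn.dist_triangle
          have h3 : T.G.dist (φ (T.par v)) z = T.G.dist z (φ (T.par v)) :=
            SimpleGraph.dist_comm
          show N₀ ≤ T.G.dist z T.root
          omega
        have hfδ : ∀ u : V, u ≠ T.root → N₀ ≤ T.depth u →
            ‖f u - f (T.par u)‖ ≤ ε / ((C : ℝ) + 1) :=
          fun u hu hdu => (hN₀ u hu hdu).le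
        have key := T.telescope f N₀ (ε / ((C : ℝ) + 1)) hfδ w hsup
        show ‖f (φ v) - f (φ (T.par v))‖ < ε
        calc ‖f (φ v) - f (φ (T.par v))‖
            ≤ w.length * (ε / ((C : ℝ) + 1)) := key
          _ ≤ (C : ℝ) * (ε / ((C : ℝ) + 1)) := by
              apply mul_le_mul_of_nonneg_right _ hδ.le
              exact_mod_cast hwlen
          _ < ε := by
              rw [mul_div_assoc', div_lt_iff₀ hC1]
              nlinarith
      · simp only [Function.comp_apply, hconst v hv hparA, sub_self, map_zero, norm_zero]
        exact hε
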